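/- Let m ≥ 4 and suppose the constant sequence (1, 1, …, 1) ∈ ℂ^m is a quiddity cycle. Then there exists a triangulation T of the convex m-gon such that for every diagonal (i,j) ∈ T the frieze entry of (i,j), namely the (1,1)-entry of η(1)^{j−i−1}, is non-zero. -/

import Mathlib

/-- The matrix `η(c) = !![c, -1; 1, 0]` over `ℂ`. -/
def eta (c : ℂ) : Matrix (Fin 2) (Fin 2) ℂ := !![c, -1; 1, 0]

/-- A diagonal of the convex `m`-gon with vertices `1, …, m`. -/
def IsDiagonal (m : ℕ) (p : ℕ × ℕ) : Prop :=
  1 ≤ p.1 ∧ p.1 < p.2 ∧ p.2 ≤ m ∧ 2 ≤ p.2 - p.1 ∧ p ≠ (1, m)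

/-- Two diagonals cross. -/
def Cross (p q : ℕ × ℕ) : Prop :=
  (p.1 < q.1 ∧ q.1 < p.2 ∧ p.2 < q.2) ∨ (q.1 < p.1 ∧ p.1 < q.2 ∧ q.2 < p.2)

/-- A triangulation of the convex `m`-gon: a set of `m − 3` pairwise non-crossing
diagonals. -/
def IsTriangulation (m : ℕ) (T : Finset (ℕ × ℕ)) : Prop :=
  T.card = m - 3 ∧ (∀ p ∈ T, IsDiagonal m p) ∧
    ∀ p ∈ T, ∀ q ∈ T, p ≠ q → ¬ Cross p q


lemma eta3 : eta 1 ^ 3 = -1 := by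
  have : (-1 : Matrix (Fin 2) (Fin 2) ℂ) = !![-1,0;0,-1] := by
    ext i j; fin_cases i <;> fin_cases j <;> simp [Matrix.one_apply]
  rw [this]; simp [eta, pow_succ, Matrix.mul_fin_two]

lemma eta6 : eta 1 ^ 6 = 1 := by
  rw [show (6:ℕ) = 3*2 by rfl, pow_mul, eta3]; simp

lemma key0 (k : ℕ) : (eta 1 ^ (3*k)) 0 0 ≠ 0 := by
  rw [pow_mul, eta3]
  rcases Nat.even_or_odd k with h | h
  · rw [h.neg_one_pow]; simp [Matrix.one_apply]
  · rw [h.neg_one_pow]; simp [Matrix.one_apply]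

lemma key1 (k : ℕ) : (eta 1 ^ (3*k+1)) 0 0 ≠ 0 := by
  rw [pow_add, pow_mul, eta3, pow_one]
  rcases Nat.even_or_odd k with h | h
  · rw [h.neg_one_pow]; simp [eta]
  · rw [h.neg_one_pow]; simp [eta]

lemma mod6 (m : ℕ) (h : eta 1 ^ m = -1) : m % 6 = 3 := by
  have hr : eta 1 ^ (m % 6) = -1 := by
    rw [← h]
    conv_rhs => rw [← Nat.div_add_mod m 6, pow_add, pow_mul, eta6, one_pow, one_mul]
  rcases (by omega : m%6 = 0 ∨ m%6=1 ∨ m%6=2 ∨ m%6=3 ∨ m%6=4 ∨ m%6=5) with h'|h'|h'|h'|h'|h' <;>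
    rw [h'] at hr
  · have := congrFun (congrFun hr 0) 0
    norm_num [pow_succ, eta, Matrix.mul_fin_two, Matrix.one_apply, Matrix.neg_apply] at this
  · have := congrFun (congrFun hr 0) 0
    norm_num [pow_succ, eta, Matrix.mul_fin_two, Matrix.one_apply, Matrix.neg_apply] at this
  · have := congrFun (congrFun hr 0) 0
    norm_num [pow_succ, eta, Matrix.mul_fin_two, Matrix.one_apply, Matrix.neg_apply] at this
  · exact h'
  · have := congrFun (congrFun hr 0) 1
    norm_num [pow_succ, eta, Matrix.mul_fin_two, Matrix.one_apply, Matrix.neg_apply] at this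
  · have := congrFun (congrFun hr 0) 0
    norm_num [pow_succ, eta, Matrix.mul_fin_two, Matrix.one_apply, Matrix.neg_apply] at this

/-- If the constant sequence `(1, …, 1)` of length `m ≥ 4` is a quiddity cycle, then there
is a triangulation of the `m`-gon all of whose diagonals `(i, j)` have non-zero frieze
entry, the `(1,1)`-entry of `η(1)^(j−i−1)`. -/
theorem stmt15 (m : ℕ) (hm : 4 ≤ m)
    (hq : ((List.range m).map (fun _ => eta 1)).prod = -1) :
    ∃ T : Finset (ℕ × ℕ), IsTriangulation m T ∧
      ∀ p ∈ T, (eta 1 ^ (p.2 - p.1 - 1)) 0 0 ≠ 0 := by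
  have hpow : eta 1 ^ m = -1 := by
    have : (List.range m).map (fun _ => eta 1) = List.replicate m (eta 1) := by
      simp [List.map_const']
    rwa [this, List.prod_replicate] at hq
  have h3 := mod6 m hpow
  set q := m / 6 with hqdef
  have hmq : m = 6 * q + 3 := by omega
  set A : Finset (ℕ × ℕ) := (Finset.range (2*q)).image fun k => (1, 3*k+3) with hA
  set B : Finset (ℕ × ℕ) := (Finset.range (2*q)).image fun k => (1, 3*k+5) with hB
  set C : Finset (ℕ × ℕ) := (Finset.range (2*q)).image fun k => (3*k+3, 3*k+5) with hC
  refine ⟨A ∪ B ∪ C, ⟨?_, ?_, ?_⟩, ?_⟩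
  · -- cardinality
    have hAB : Disjoint A B := by
      simp only [Finset.disjoint_left, hA, hB, Finset.mem_image, Finset.mem_range]
      rintro p ⟨k, hk, rfl⟩ ⟨l, hl, h⟩
      simp only [Prod.mk.injEq] at h; omega
    have hABC : Disjoint (A ∪ B) C := by
      simp only [Finset.disjoint_left, hA, hB, hC, Finset.mem_union, Finset.mem_image,
        Finset.mem_range]
      rintro p (⟨k, hk, rfl⟩ | ⟨k, hk, rfl⟩) ⟨l, hl, h⟩ <;>
        · simp only [Prod.mk.injEq] at h; omega
    rw [Finset.card_union_of_disjoint hABC, Finset.card_union_of_disjoint hAB]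
    rw [hA, hB, hC, Finset.card_image_of_injective, Finset.card_image_of_injective,
      Finset.card_image_of_injective, Finset.card_range]
    · omega
    all_goals intro a b h; simp only [Prod.mk.injEq] at h; omega
  · -- diagonals
    rintro p hp
    simp only [hA, hB, hC, Finset.mem_union, Finset.mem_image, Finset.mem_range] at hp
    rcases hp with (⟨k, hk, rfl⟩ | ⟨k, hk, rfl⟩) | ⟨k, hk, rfl⟩ <;>
      refine ⟨by omega, by omega, by omega, by omega, ?_⟩ <;>
      · simp only [ne_eq, Prod.mk.injEq, not_and]; omega
  · -- non-crossing
    rintro p hp q' hq' hne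
    simp only [hA, hB, hC, Finset.mem_union, Finset.mem_image, Finset.mem_range] at hp hq'
    rcases hp with (⟨k, hk, rfl⟩ | ⟨k, hk, rfl⟩) | ⟨k, hk, rfl⟩ <;>
      rcases hq' with (⟨l, hl, rfl⟩ | ⟨l, hl, rfl⟩) | ⟨l, hl, rfl⟩ <;>
      · simp only [Cross, not_or, not_and]; constructor <;> intro h <;> omega
  · -- frieze entries
    rintro p hp
    simp only [hA, hB, hC, Finset.mem_union, Finset.mem_image, Finset.mem_range] at hp
    rcases hp with (⟨k, hk, rfl⟩ | ⟨k, hk, rfl⟩) | ⟨k, hk, rfl⟩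
    · have : 3*k+3-1-1 = 3*k+1 := by omega
      simpa [this] using key1 k
    · have : 3*k+5-1-1 = 3*(k+1) := by omega
      simpa [this, mul_add] using key0 (k+1)
    · have : 3*k+5-(3*k+3)-1 = 3*0+1 := by omega
      simpa [this] using key1 0
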